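/- Fix an integer m ≥ 1, reals c ∈ (0, 1/2), c_expl ∈ (0, 1], μ₁, μ₂ ∈ (c, 1−c) with μ₂ ≥ μ₁ + c, and a coordinatewise non-decreasing f : {0,1}^m → [0, m] with f(0,…,0) = 0 < f(1,…,1). Set c′ = c^{2m}·(f(1,…,1) − f(0,…,0)). If c_expl ≤ c′/(2m), then V(π₂) − sup_{π ∈ Π_bad} V(π) ≥ c′/2, where V(π) is the expected score f(rewards) minus c_expl times the number of non-skip pulls of the m-round policy π (pulls of arm i yield i.i.d. Bernoulli(μᵢ) rewards, skips yield reward 0 at no cost), π₂ always plays arm 2, and Π_bad is the set of policies never playing arm 2. -/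

import Mathlib

open MeasureTheory

/-- An action within an episode: pull arm 1, pull arm 2, or skip the round. -/
inductive EpAct : Type
  | arm1 : EpAct
  | arm2 : EpAct
  | skip : EpAct
deriving DecidableEq

/-- A per-episode policy maps the list of rewards observed so far (its length
encodes the current round) to the next action. -/
abbrev EpPolicy : Type := List Bool → EpAct

/-- Reward history after `t` rounds when running policy `π` against reward
tapes `ω₁ ω₂` (the round-`t` reward of arm `i` is `ωᵢ t`; skipping yields
reward `false`). -/
def epHist (π : EpPolicy) (ω₁ ω₂ : ℕ → Bool) : ℕ → List Bool
  | 0 => []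
  | t + 1 =>
      let h := epHist π ω₁ ω₂ t
      h ++ [match π h with
            | EpAct.arm1 => ω₁ t
            | EpAct.arm2 => ω₂ t
            | EpAct.skip => false]

/-- Number of non-skip pulls made by policy `π` during an `m`-round episode. -/
def epPulls (m : ℕ) (π : EpPolicy) (ω₁ ω₂ : ℕ → Bool) : ℕ :=
  ((Finset.range m).filter fun t => π (epHist π ω₁ ω₂ t) ≠ EpAct.skip).card

/-- Utility of policy `π` on realized tapes: score `f` of the reward vector
minus `c_expl` per non-skip pull. -/
noncomputable def epUtil (m : ℕ) (f : (Fin m → Bool) → ℝ) (cExpl : ℝ)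
    (π : EpPolicy) (ω₁ ω₂ : ℕ → Bool) : ℝ :=
  f (fun i => (epHist π ω₁ ω₂ m).getD i false) - cExpl * epPulls m π ω₁ ω₂

/-- Expected utility `V(π)`: expectation over the two independent i.i.d.
Bernoulli reward tapes. -/
noncomputable def epValue (m : ℕ) (f : (Fin m → Bool) → ℝ) (cExpl μ₁ μ₂ : ℝ)
    (h₁ : ENNReal.ofReal μ₁ ≤ 1) (h₂ : ENNReal.ofReal μ₂ ≤ 1)
    (π : EpPolicy) : ℝ :=
  ∫ ω : (Fin m → Bool) × (Fin m → Bool),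
      epUtil m f cExpl π
        (fun t => if h : t < m then ω.1 ⟨t, h⟩ else false)
        (fun t => if h : t < m then ω.2 ⟨t, h⟩ else false)
    ∂((Measure.pi fun _ : Fin m => (PMF.bernoulli (Real.toNNReal μ₁) (ENNReal.coe_le_one_iff.mp h₁)).toMeasure).prod
        (Measure.pi fun _ : Fin m => (PMF.bernoulli (Real.toNNReal μ₂) (ENNReal.coe_le_one_iff.mp h₂)).toMeasure))

namespace Stmt18Aux

/-- Bernoulli weight. -/
def bw (p : ℝ) (b : Bool) : ℝ := if b then p else 1 - p

/-- coupling weight -/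
def cw (p q : ℝ) (a b : Bool) : ℝ :=
  match a, b with
  | false, false => 1 - q
  | false, true  => q - p
  | true,  true  => p
  | true,  false => 0

lemma cw_nonneg {p q : ℝ} (hp : 0 ≤ p) (hq : q ≤ 1) (hpq : p ≤ q) (a b : Bool) :
    0 ≤ cw p q a b := by
  cases a <;> cases b <;> simp [cw] <;> linarith

lemma cw_le {p q : ℝ} (a b : Bool) (h : cw p q a b ≠ 0) : a ≤ b := by
  cases a <;> cases b <;> simp_all [cw]

lemma sum_cw_right (p q : ℝ) (a : Bool) : ∑ b : Bool, cw p q a b = bw p a := by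
  cases a <;> simp [cw, bw] <;> ring

lemma sum_cw_left (p q : ℝ) (b : Bool) : ∑ a : Bool, cw p q a b = bw q b := by
  cases b <;> simp [cw, bw] <;> ring

/-- Expand a bernoulli-product-weighted sum via the coupling. -/
lemma sum_bw_eq_right (m : ℕ) (p q : ℝ) (g : (Fin m → Bool) → ℝ) :
    ∑ x : Fin m → Bool, (∏ i, bw p (x i)) * g x
      = ∑ x : Fin m → Bool, ∑ y : Fin m → Bool, (∏ i, cw p q (x i) (y i)) * g x := by
  refine Finset.sum_congr rfl fun x _ => ?_
  rw [← Finset.sum_mul]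
  congr 1
  have h := Finset.prod_univ_sum (fun _ : Fin m => (Finset.univ : Finset Bool))
    (fun i b => cw p q (x i) b)
  simp only [sum_cw_right] at h
  rw [h, Fintype.piFinset_univ]

lemma sum_bw_eq_left (m : ℕ) (p q : ℝ) (g : (Fin m → Bool) → ℝ) :
    ∑ y : Fin m → Bool, (∏ i, bw q (y i)) * g y
      = ∑ x : Fin m → Bool, ∑ y : Fin m → Bool, (∏ i, cw p q (x i) (y i)) * g y := by
  rw [Finset.sum_comm]
  refine Finset.sum_congr rfl fun y _ => ?_
  rw [← Finset.sum_mul]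
  congr 1
  have h := Finset.prod_univ_sum (fun _ : Fin m => (Finset.univ : Finset Bool))
    (fun i a => cw p q a (y i))
  simp only [sum_cw_left] at h
  rw [h, Fintype.piFinset_univ]

/-- The key quantitative monotone-coupling gap. -/
lemma bern_gap (m : ℕ) (p q : ℝ) (hp : 0 ≤ p) (hq : q ≤ 1) (hpq : p ≤ q)
    (f : (Fin m → Bool) → ℝ) (hmono : Monotone f) :
    (q - p) ^ m * (f (fun _ => true) - f (fun _ => false))
      ≤ (∑ y : Fin m → Bool, (∏ i, bw q (y i)) * f y)
        - ∑ x : Fin m → Bool, (∏ i, bw p (x i)) * f x := by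
  rw [sum_bw_eq_left m p q f, sum_bw_eq_right m p q f, ← Finset.sum_sub_distrib]
  have hterm : ∀ x y : Fin m → Bool,
      0 ≤ (∏ i, cw p q (x i) (y i)) * (f y - f x) := by
    intro x y
    by_cases h : (∏ i, cw p q (x i) (y i)) = 0
    · simp [h]
    · have hxy : x ≤ y := by
        intro i
        exact cw_le _ _ (Finset.prod_ne_zero_iff.mp h i (Finset.mem_univ i))
      have := hmono hxy
      have hpr : 0 ≤ ∏ i, cw p q (x i) (y i) :=
        Finset.prod_nonneg fun i _ => cw_nonneg hp hq hpq _ _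
      nlinarith
  have hmain : ∀ x y : Fin m → Bool,
      (∏ i, cw p q (x i) (y i)) * f y - (∏ i, cw p q (x i) (y i)) * f x
        = (∏ i, cw p q (x i) (y i)) * (f y - f x) := by intro x y; ring
  calc (q - p) ^ m * (f (fun _ => true) - f (fun _ => false))
      = (∏ _i : Fin m, cw p q ((fun _ => false) _i) ((fun _ => true) _i))
          * (f (fun _ => true) - f (fun _ => false)) := by
        simp [cw, Finset.prod_const]
    _ ≤ ∑ y : Fin m → Bool,
          (∏ i, cw p q ((fun _ => false) i) (y i)) * (f y - f (fun _ => false)) := by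
        refine Finset.single_le_sum (f := fun y => (∏ i, cw p q ((fun _ => false) i) (y i)) * (f y - f (fun _ => false))) (fun y _ => hterm _ y) (Finset.mem_univ _)
    _ ≤ ∑ x : Fin m → Bool, ∑ y : Fin m → Bool,
          (∏ i, cw p q (x i) (y i)) * (f y - f x) := by
        refine Finset.single_le_sum (f := fun x => ∑ y : Fin m → Bool,
          (∏ i, cw p q (x i) (y i)) * (f y - f x)) (fun x _ => ?_) (Finset.mem_univ _)
        exact Finset.sum_nonneg fun y _ => hterm x y
    _ = ∑ x : Fin m → Bool, ∑ y : Fin m → Bool,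
          ((∏ i, cw p q (x i) (y i)) * f y - (∏ i, cw p q (x i) (y i)) * f x) := by
        simp_rw [hmain]
    _ = _ := by simp_rw [Finset.sum_sub_distrib]

/-- Integral against the bernoulli product measure as a weighted sum. -/
lemma integral_pi_bern (m : ℕ) (p : ℝ) (hp0 : 0 ≤ p) (hp1 : p ≤ 1)
    (h : ENNReal.ofReal p ≤ 1) (g : (Fin m → Bool) → ℝ) :
    ∫ x, g x ∂(Measure.pi fun _ : Fin m => (PMF.bernoulli (Real.toNNReal p) (ENNReal.coe_le_one_iff.mp h)).toMeasure)
      = ∑ x : Fin m → Bool, (∏ i, bw p (x i)) * g x := by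
  rw [integral_fintype .of_finite]
  refine Finset.sum_congr rfl fun x _ => ?_
  have hsing : ({x} : Set (Fin m → Bool)) = Set.univ.pi fun i => {x i} :=
    (Set.univ_pi_singleton x).symm
  rw [smul_eq_mul, hsing, measureReal_def, Measure.pi_pi]
  congr 1
  have hfac : ∀ i : Fin m,
      (PMF.bernoulli (Real.toNNReal p) (ENNReal.coe_le_one_iff.mp h)).toMeasure {x i} = ENNReal.ofReal (bw p (x i)) := by
    intro i
    rw [PMF.toMeasure_apply_singleton _ _ (measurableSet_singleton _),
      PMF.bernoulli_apply]
    cases hxi : x i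
    · simp [bw, ENNReal.ofReal_sub, hp0]; rfl
    · simp [bw]; rfl
  rw [Finset.prod_congr rfl fun i _ => hfac i, ← ENNReal.ofReal_prod_of_nonneg,
    ENNReal.toReal_ofReal]
  · exact Finset.prod_nonneg fun i _ => by
      cases hxi : x i <;> simp [bw] <;> linarith
  · intro i _
    cases hxi : x i <;> simp [bw] <;> linarith



lemma getD_append_left (l : List Bool) (a : Bool) (i : ℕ) (h : i < l.length) :
    (l ++ [a]).getD i false = l.getD i false := by
  simp [List.getD, List.getElem?_append_left h]

lemma getD_concat (l : List Bool) (a : Bool) :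
    (l ++ [a]).getD l.length false = a := by
  simp [List.getD]

lemma epHist_length (π : EpPolicy) (ω₁ ω₂ : ℕ → Bool) (t : ℕ) :
    (epHist π ω₁ ω₂ t).length = t := by
  induction t with
  | zero => rfl
  | succ t ih => simp [epHist, ih]

lemma epHist_arm2 (ω₁ ω₂ : ℕ → Bool) (t i : ℕ) (hi : i < t) :
    (epHist (fun _ => EpAct.arm2) ω₁ ω₂ t).getD i false = ω₂ i := by
  induction t with
  | zero => omega
  | succ t ih =>
    show ((epHist (fun _ => EpAct.arm2) ω₁ ω₂ t) ++ [ω₂ t]).getD i false = ω₂ i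
    rcases Nat.lt_or_ge i t with h | h
    · rw [getD_append_left _ _ _ (by rw [epHist_length]; exact h)]
      exact ih h
    · have : i = t := by omega
      subst this
      have hg := getD_concat (epHist (fun _ => EpAct.arm2) ω₁ ω₂ i) (ω₂ i)
      rw [epHist_length] at hg
      exact hg

lemma epHist_bad (π : EpPolicy) (hπ : ∀ l, π l ≠ EpAct.arm2) (ω₁ ω₂ : ℕ → Bool)
    (t i : ℕ) (hi : i < t) :
    (epHist π ω₁ ω₂ t).getD i false ≤ ω₁ i := by
  induction t with
  | zero => omega
  | succ t ih =>
    show ((epHist π ω₁ ω₂ t) ++ [_]).getD i false ≤ ω₁ i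
    rcases Nat.lt_or_ge i t with h | h
    · rw [getD_append_left _ _ _ (by rw [epHist_length]; exact h)]
      exact ih h
    · have : i = t := by omega
      subst this
      have hg := getD_concat (epHist π ω₁ ω₂ i)
        (match π (epHist π ω₁ ω₂ i) with
          | EpAct.arm1 => ω₁ i
          | EpAct.arm2 => ω₂ i
          | EpAct.skip => false)
      rw [epHist_length] at hg
      rw [hg]
      rcases hact : π (epHist π ω₁ ω₂ i) with _ | _ | _
      · simp
      · exact absurd hact (hπ _)
      · simp

lemma epPulls_arm2 (m : ℕ) (ω₁ ω₂ : ℕ → Bool) :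
    epPulls m (fun _ => EpAct.arm2) ω₁ ω₂ = m := by
  unfold epPulls
  rw [Finset.filter_true_of_mem, Finset.card_range]
  intro t _
  simp

lemma epPulls_le (m : ℕ) (π : EpPolicy) (ω₁ ω₂ : ℕ → Bool) :
    epPulls m π ω₁ ω₂ ≤ m := by
  unfold epPulls
  exact le_trans (Finset.card_filter_le _ _) (by rw [Finset.card_range])

end Stmt18Aux

open Stmt18Aux

theorem stmt_18 (m : ℕ) (hm : 1 ≤ m) (c cExpl μ₁ μ₂ : ℝ)
    (hc : c ∈ Set.Ioo (0 : ℝ) (1 / 2)) (hcE : cExpl ∈ Set.Ioc (0 : ℝ) 1)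
    (hμ₁ : μ₁ ∈ Set.Ioo c (1 - c)) (hμ₂ : μ₂ ∈ Set.Ioo c (1 - c))
    (hgap : μ₂ ≥ μ₁ + c)
    (h₁ : ENNReal.ofReal μ₁ ≤ 1) (h₂ : ENNReal.ofReal μ₂ ≤ 1)
    (f : (Fin m → Bool) → ℝ) (hmono : Monotone f)
    (hrange : ∀ x, f x ∈ Set.Icc (0 : ℝ) m)
    (hbot : f (fun _ => false) = 0) (htop : 0 < f (fun _ => true))
    (c' : ℝ) (hc' : c' = c ^ (2 * m) * (f (fun _ => true) - f (fun _ => false)))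
    (hsmall : cExpl ≤ c' / (2 * m)) :
    epValue m f cExpl μ₁ μ₂ h₁ h₂ (fun _ => EpAct.arm2)
      - (⨆ π : {π : EpPolicy // ∀ l, π l ≠ EpAct.arm2},
          epValue m f cExpl μ₁ μ₂ h₁ h₂ π.val)
      ≥ c' / 2 := by
  obtain ⟨hc0, hc12⟩ := hc
  obtain ⟨hμ₁c, hμ₁u⟩ := hμ₁
  obtain ⟨hμ₂c, hμ₂u⟩ := hμ₂
  have hm1 : (1:ℝ) ≤ (m:ℝ) := by exact_mod_cast hm
  have hΔ0 : 0 ≤ f (fun _ => true) - f (fun _ => false) :=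
    sub_nonneg.2 (hmono fun i => Bool.false_le _)
  -- the two marginal measures
  set M1 := Measure.pi fun _ : Fin m => (PMF.bernoulli (Real.toNNReal μ₁) (ENNReal.coe_le_one_iff.mp h₁)).toMeasure with hM1
  set M2 := Measure.pi fun _ : Fin m => (PMF.bernoulli (Real.toNNReal μ₂) (ENNReal.coe_le_one_iff.mp h₂)).toMeasure with hM2
  -- utility gap between the two bernoulli products
  have hgapE : c' ≤ (∫ x, f x ∂M2) - ∫ x, f x ∂M1 := by
    rw [hM1, hM2, integral_pi_bern m μ₂ (le_trans hc0.le hμ₂c.le) (by linarith) h₂ f,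
      integral_pi_bern m μ₁ (le_trans hc0.le hμ₁c.le) (by linarith) h₁ f]
    calc c' = c ^ (2*m) * (f (fun _ => true) - f (fun _ => false)) := hc'
      _ ≤ c ^ m * (f (fun _ => true) - f (fun _ => false)) :=
          mul_le_mul_of_nonneg_right
            (pow_le_pow_of_le_one hc0.le (by linarith) (by omega)) hΔ0
      _ ≤ (μ₂ - μ₁) ^ m * (f (fun _ => true) - f (fun _ => false)) :=
          mul_le_mul_of_nonneg_right
            (pow_le_pow_left₀ hc0.le (by linarith) m) hΔ0
      _ ≤ _ := bern_gap m μ₁ μ₂ (by linarith) (by linarith) (by linarith) f hmono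
  -- value of the always-arm-2 policy
  have hV2 : epValue m f cExpl μ₁ μ₂ h₁ h₂ (fun _ => EpAct.arm2)
      = (∫ x, f x ∂M2) - cExpl * m := by
    unfold epValue
    have hptw : ∀ ω : (Fin m → Bool) × (Fin m → Bool),
        epUtil m f cExpl (fun _ => EpAct.arm2)
          (fun t => if h : t < m then ω.1 ⟨t, h⟩ else false)
          (fun t => if h : t < m then ω.2 ⟨t, h⟩ else false)
        = f ω.2 - cExpl * m := by
      intro ω
      unfold epUtil
      rw [epPulls_arm2]
      congr 1
      congr 1
      funext i
      rw [epHist_arm2 _ _ m i.val i.isLt]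
      simp
    calc ∫ ω : (Fin m → Bool) × (Fin m → Bool),
          epUtil m f cExpl (fun _ => EpAct.arm2)
            (fun t => if h : t < m then ω.1 ⟨t, h⟩ else false)
            (fun t => if h : t < m then ω.2 ⟨t, h⟩ else false) ∂(M1.prod M2)
        = ∫ ω : (Fin m → Bool) × (Fin m → Bool), (f ω.2 - cExpl * m) ∂(M1.prod M2) := by
          exact integral_congr_ae (Filter.Eventually.of_forall hptw)
      _ = (∫ ω : (Fin m → Bool) × (Fin m → Bool), f ω.2 ∂(M1.prod M2)) - cExpl * m := by
          rw [integral_sub .of_finite .of_finite, integral_const]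
          simp
      _ = (∫ x, f x ∂M2) - cExpl * m := by
          rw [integral_prod _ .of_finite]
          simp [integral_const]
  -- value of any arm-2-avoiding policy
  have hVbad : ∀ π : EpPolicy, (∀ l, π l ≠ EpAct.arm2) →
      epValue m f cExpl μ₁ μ₂ h₁ h₂ π ≤ ∫ x, f x ∂M1 := by
    intro π hπ
    unfold epValue
    have hptw : ∀ ω : (Fin m → Bool) × (Fin m → Bool),
        epUtil m f cExpl π
          (fun t => if h : t < m then ω.1 ⟨t, h⟩ else false)
          (fun t => if h : t < m then ω.2 ⟨t, h⟩ else false)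
        ≤ f ω.1 := by
      intro ω
      unfold epUtil
      have hle : f (fun i => (epHist π
          (fun t => if h : t < m then ω.1 ⟨t, h⟩ else false)
          (fun t => if h : t < m then ω.2 ⟨t, h⟩ else false) m).getD i false) ≤ f ω.1 := by
        refine hmono fun i => ?_
        have h := epHist_bad π hπ
          (fun t => if h : t < m then ω.1 ⟨t, h⟩ else false)
          (fun t => if h : t < m then ω.2 ⟨t, h⟩ else false) m i.val i.isLt
        simpa using h
      have hc0' : 0 ≤ cExpl * (epPulls m π
          (fun t => if h : t < m then ω.1 ⟨t, h⟩ else false)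
          (fun t => if h : t < m then ω.2 ⟨t, h⟩ else false) : ℝ) :=
        mul_nonneg hcE.1.le (Nat.cast_nonneg _)
      linarith
    calc ∫ ω : (Fin m → Bool) × (Fin m → Bool),
          epUtil m f cExpl π
            (fun t => if h : t < m then ω.1 ⟨t, h⟩ else false)
            (fun t => if h : t < m then ω.2 ⟨t, h⟩ else false) ∂(M1.prod M2)
        ≤ ∫ ω : (Fin m → Bool) × (Fin m → Bool), f ω.1 ∂(M1.prod M2) :=
          integral_mono .of_finite .of_finite hptw
      _ = ∫ x, f x ∂M1 := by
          rw [integral_prod _ .of_finite]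
          simp [integral_const]
  haveI : Nonempty {π : EpPolicy // ∀ l, π l ≠ EpAct.arm2} :=
    ⟨⟨fun _ => EpAct.skip, fun l h => by cases h⟩⟩
  have hsup : (⨆ π : {π : EpPolicy // ∀ l, π l ≠ EpAct.arm2},
      epValue m f cExpl μ₁ μ₂ h₁ h₂ π.val) ≤ ∫ x, f x ∂M1 :=
    ciSup_le fun π => hVbad π.1 π.2
  have hcm : cExpl * m ≤ c' / 2 := by
    have h2m : (0:ℝ) < 2 * m := by linarith
    calc cExpl * m ≤ (c' / (2 * m)) * m :=
        mul_le_mul_of_nonneg_right hsmall (by linarith)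
      _ = c' / 2 := by field_simp
  rw [ge_iff_le, le_sub_iff_add_le, hV2]
  linarith
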